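/- Let t ∈ ℂ with t ≠ 0 and t ≠ 1. The conjugacy class of the matrix [[t,1,0],[0,t,0],[0,0,1]] in the group Ũ₃(ℂ) is exactly the set of matrices [[t,b,c],[0,t,e],[0,0,1]] with b ≠ 0 (and c, e ∈ ℂ arbitrary). -/

import Mathlib

open Matrix

/-- `3 × 3` matrices over `F`. -/
abbrev M3 (F : Type*) := Matrix (Fin 3) (Fin 3) F

/-- Membership in the group `Ũ₃(F)` of upper triangular `3 × 3` matrices
`[[a,b,c],[0,d,e],[0,0,1]]` with `a, d ≠ 0` and `(3,3)`-entry equal to `1`. -/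
def inU3 {F : Type*} [Field F] (A : M3 F) : Prop :=
  A 0 0 ≠ 0 ∧ A 1 1 ≠ 0 ∧ A 2 2 = 1 ∧ A 1 0 = 0 ∧ A 2 0 = 0 ∧ A 2 1 = 0

theorem stmt_18 (t : ℂ) (ht0 : t ≠ 0) (ht1 : t ≠ 1) :
    {B : M3 ℂ | ∃ P Q : M3 ℂ, inU3 P ∧ inU3 Q ∧ P * Q = 1 ∧
        B = P * !![t, 1, 0; 0, t, 0; 0, 0, 1] * Q} =
      {B : M3 ℂ | ∃ b c e : ℂ, b ≠ 0 ∧ B = !![t, b, c; 0, t, e; 0, 0, 1]} := by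
  have h1t : (1:ℂ) - t ≠ 0 := sub_ne_zero.mpr (Ne.symm ht1)
  ext B
  simp only [Set.mem_setOf_eq]
  constructor
  · rintro ⟨P, Q, hP, hQ, hPQ, rfl⟩
    obtain ⟨hP00, hP11, hP22, hP10, hP20, hP21⟩ := hP
    obtain ⟨hQ00, hQ11, hQ22, hQ10, hQ20, hQ21⟩ := hQ
    have e00 := congrFun (congrFun hPQ 0) 0
    have e01 := congrFun (congrFun hPQ 0) 1
    have e11 := congrFun (congrFun hPQ 1) 1
    simp [Matrix.mul_apply, Fin.sum_univ_three, hP10, hP20, hP21, hQ10, hQ20, hQ21,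
      Matrix.one_apply] at e00 e01 e11
    refine ⟨P 0 0 * Q 1 1, (P * !![t, 1, 0; 0, t, 0; 0, 0, 1] * Q) 0 2,
      (P * !![t, 1, 0; 0, t, 0; 0, 0, 1] * Q) 1 2, mul_ne_zero hP00 hQ11, ?_⟩
    ext i j
    fin_cases i <;> fin_cases j <;>
      simp [Matrix.mul_apply, Fin.sum_univ_three, hP10, hP20, hP21, hQ10, hQ20, hQ21,
        hP22, hQ22, Matrix.vecHead, Matrix.vecTail]
    · linear_combination t * e00
    · linear_combination t * e01
    · linear_combination t * e11
  · rintro ⟨b, c, e, hb, rfl⟩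
    obtain ⟨u, rfl⟩ : ∃ u, e = (1 - t) * u := ⟨e / (1 - t), by field_simp⟩
    obtain ⟨r, rfl⟩ : ∃ r, c = (1 - t) * r - b * u :=
      ⟨(c + b * u) / (1 - t), by field_simp; ring⟩
    refine ⟨!![b, 0, r; 0, 1, u; 0, 0, 1],
      !![b⁻¹, 0, -(r * b⁻¹); 0, 1, -u; 0, 0, 1],
      ⟨hb, one_ne_zero, rfl, rfl, rfl, rfl⟩,
      ⟨inv_ne_zero hb, one_ne_zero, rfl, rfl, rfl, rfl⟩, ?_, ?_⟩
    · ext i j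
      fin_cases i <;> fin_cases j <;>
        simp [Matrix.mul_apply, Fin.sum_univ_three, Matrix.one_fin_three,
          Matrix.vecHead, Matrix.vecTail] <;>
        (field_simp <;> ring)
    · ext i j
      fin_cases i <;> fin_cases j <;>
        simp [Matrix.mul_apply, Fin.sum_univ_three, Matrix.vecHead, Matrix.vecTail] <;>
        first
          | (field_simp <;> ring)
          | ring
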